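/- Let {X_j} be an arbitrary sequence of random variables with M_n = max_{0≤j≤n−1} X_j. Suppose {X_j} admits a continuous phantom distribution function G. Then for every β > 0 there exists a nondecreasing sequence of levels (v_n) such that P(M_{⌊nt⌋} ≤ v_n) → exp(−βt) for every t > 0. -/

import Mathlib

open MeasureTheory Filter Topology Set

noncomputable section

/-- Event that the partial maximum `max_{0 ≤ j ≤ n-1} X_j` is at most `x`
(empty maximum interpreted as `-∞`, so the event is everything for `n = 0`). -/
def maxEvent {Ω : Type*} (X : ℕ → Ω → ℝ) (n : ℕ) (x : ℝ) : Set Ω :=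
  {ω | ∀ j < n, X j ω ≤ x}

/-- `G` is a distribution function: nondecreasing, right-continuous, with limits
`0` at `-∞` and `1` at `+∞`. -/
def IsDistFun (G : ℝ → ℝ) : Prop :=
  Monotone G ∧ (∀ x, ContinuousWithinAt G (Set.Ici x) x) ∧
    Tendsto G atBot (nhds 0) ∧ Tendsto G atTop (nhds 1)

/-- `G` is a phantom distribution function for `X` under `P`:
`sup_x |P(M_n ≤ x) - G(x)^n| → 0`. -/
def IsPhantom {Ω : Type*} [MeasurableSpace Ω] (P : Measure Ω) (X : ℕ → Ω → ℝ)
    (G : ℝ → ℝ) : Prop :=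
  Tendsto (fun n => ⨆ x : ℝ, |(P (maxEvent X n x)).toReal - G x ^ n|) atTop (nhds 0)

/-- The right end `G_* = sup {x : G x < 1}`, as an extended real. -/
def GstarE (G : ℝ → ℝ) : EReal := sSup ((fun x : ℝ => (x : EReal)) '' {x | G x < 1})

/-- The filter of real numbers approaching `c ∈ (-∞, +∞]` strictly from the left
(equals `atTop` when `c = ⊤`). -/
def leftFilter (c : EReal) : Filter ℝ :=
  Filter.comap (fun x : ℝ => (x : EReal)) (nhdsWithin c (Set.Iio c))

/-- Regularity in the sense of O'Brien: `G(G_*-) = 1` and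
`(1 - G(x-))/(1 - G(x)) → 1` as `x → G_*-`. -/
def IsRegularDF (G : ℝ → ℝ) : Prop :=
  Tendsto G (leftFilter (GstarE G)) (nhds 1) ∧
    Tendsto (fun x => (1 - Function.leftLim G x) / (1 - G x))
      (leftFilter (GstarE G)) (nhds 1)

theorem continuous_phantom_gives_levels {Ω : Type*} [MeasurableSpace Ω]
    (P : Measure Ω) [IsProbabilityMeasure P] (X : ℕ → Ω → ℝ)
    (hX : ∀ j, Measurable (X j)) (G : ℝ → ℝ) (hG : IsDistFun G)
    (hGcont : Continuous G) (hph : IsPhantom P X G) :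
    ∀ β : ℝ, 0 < β → ∃ v : ℕ → ℝ, Monotone v ∧
      ∀ t : ℝ, 0 < t →
        Tendsto (fun n : ℕ => (P (maxEvent X ⌊(n : ℝ) * t⌋₊ (v n))).toReal)
          atTop (nhds (Real.exp (-β * t))) := by

  intro β hβ
  obtain ⟨hGmono, _, hbot, htop⟩ := hG
  have hG0 : ∀ x, 0 ≤ G x := fun x =>
    le_of_tendsto hbot ((eventually_le_atBot x).mono fun y hy => hGmono hy)
  have hG1 : ∀ x, G x ≤ 1 := fun x =>
    ge_of_tendsto htop ((eventually_ge_atTop x).mono fun y hy => hGmono hy)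
  set c : ℕ → ℝ := fun n => Real.exp (-β / (max n 1 : ℕ)) with hc_def
  have hmaxpos : ∀ n : ℕ, (0:ℝ) < (max n 1 : ℕ) := by
    intro n
    have : 1 ≤ max n 1 := le_max_right _ _
    exact_mod_cast this
  have hc0 : ∀ n, 0 < c n := fun n => Real.exp_pos _
  have hc1 : ∀ n, c n < 1 := by
    intro n
    exact Real.exp_lt_one_iff.mpr (div_neg_of_neg_of_pos (neg_neg_of_pos hβ) (hmaxpos n))
  have hcmono : Monotone c := by
    intro n m hnm
    apply Real.exp_le_exp.2
    rw [neg_div, neg_div, neg_le_neg_iff]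
    apply div_le_div_of_nonneg_left hβ.le (hmaxpos n)
    exact_mod_cast max_le_max hnm le_rfl
  set S : ℕ → Set ℝ := fun n => {x | c n ≤ G x} with hS_def
  have hSclosed : ∀ n, IsClosed (S n) := fun n => isClosed_le continuous_const hGcont
  have hSne : ∀ n, (S n).Nonempty := by
    intro n
    obtain ⟨x, hx⟩ := (htop.eventually (eventually_gt_nhds (hc1 n))).exists
    exact ⟨x, hx.le⟩
  have hSbdd : ∀ n, BddBelow (S n) := by
    intro n
    obtain ⟨a, ha⟩ := (hbot.eventually (eventually_lt_nhds (hc0 n))).exists_forall_of_atBot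
    refine ⟨a, fun x hx => ?_⟩
    by_contra h
    exact absurd hx (not_le.2 (ha x (le_of_not_ge h)))
  set v : ℕ → ℝ := fun n => sInf (S n) with hv_def
  have hvmem : ∀ n, v n ∈ S n := fun n => (hSclosed n).csInf_mem (hSne n) (hSbdd n)
  have hGv : ∀ n, G (v n) = c n := by
    intro n
    refine le_antisymm ?_ (hvmem n)
    by_contra h
    push_neg at h
    have hev : ∀ᶠ x in 𝓝 (v n), c n < G x :=
      hGcont.continuousAt.eventually_const_lt h
    have hev2 : ∀ᶠ x in 𝓝[<] (v n), c n < G x ∧ x ∈ Set.Iio (v n) :=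
      (hev.filter_mono nhdsWithin_le_nhds).and self_mem_nhdsWithin
    obtain ⟨x, hx1, hx2⟩ := hev2.exists
    exact absurd (csInf_le (hSbdd n) hx1.le) (not_le.2 hx2)
  have hvmono : Monotone v := by
    intro n m hnm
    exact csInf_le_csInf (hSbdd n) (hSne m) fun x hx => le_trans (hcmono hnm) hx
  refine ⟨v, hvmono, ?_⟩
  intro t ht
  set m : ℕ → ℕ := fun n => ⌊(n : ℝ) * t⌋₊ with hm_def
  have hm : Tendsto m atTop atTop :=
    tendsto_nat_floor_atTop.comp (Tendsto.atTop_mul_const ht tendsto_natCast_atTop_atTop)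
  set D : ℕ → ℝ := fun n => ⨆ x : ℝ, |(P (maxEvent X (m n) x)).toReal - G x ^ (m n)|
    with hD_def
  have hD : Tendsto D atTop (𝓝 0) := hph.comp hm
  set A : ℕ → ℝ := fun n => (P (maxEvent X (m n) (v n))).toReal with hA_def
  set B : ℕ → ℝ := fun n => G (v n) ^ (m n) with hB_def
  -- bound |A n - B n| ≤ D n
  have hbdd : ∀ n, BddAbove (Set.range fun x : ℝ =>
      |(P (maxEvent X (m n) x)).toReal - G x ^ (m n)|) := by
    intro n
    refine ⟨2, ?_⟩
    rintro _ ⟨x, rfl⟩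
    have h1 : (P (maxEvent X (m n) x)).toReal ≤ 1 := by
      have h := ENNReal.toReal_mono ENNReal.one_ne_top
        (prob_le_one (μ := P) (s := maxEvent X (m n) x))
      simpa using h
    have h2 : G x ^ (m n) ≤ 1 := pow_le_one₀ (hG0 x) (hG1 x)
    have h3 : 0 ≤ G x ^ (m n) := pow_nonneg (hG0 x) _
    have h4 : 0 ≤ (P (maxEvent X (m n) x)).toReal := ENNReal.toReal_nonneg
    show |(P (maxEvent X (m n) x)).toReal - G x ^ (m n)| ≤ 2
    rw [abs_sub_le_iff]
    constructor <;> linarith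
  have hAB : ∀ n, |A n - B n| ≤ D n := fun n =>
    le_ciSup (hbdd n) (v n)
  have hABlim : Tendsto (fun n => A n - B n) atTop (𝓝 0) := by
    apply squeeze_zero_norm _ hD
    intro n
    simpa [Real.norm_eq_abs] using hAB n
  -- B n → exp (-β * t)
  have hfloor : Tendsto (fun n : ℕ => (⌊(n : ℝ) * t⌋₊ : ℝ) / n) atTop (𝓝 t) := by
    have h := (tendsto_nat_floor_mul_div_atTop ht.le).comp
      (tendsto_natCast_atTop_atTop (R := ℝ))
    simpa [Function.comp_def, mul_comm] using h
  have hBlim : Tendsto B atTop (𝓝 (Real.exp (-β * t))) := by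
    have hexp : Tendsto (fun n : ℕ => Real.exp (-β * ((m n : ℝ) / n))) atTop
        (𝓝 (Real.exp (-β * t))) :=
      (Real.continuous_exp.tendsto _).comp (hfloor.const_mul (-β))
    apply hexp.congr'
    filter_upwards [eventually_ge_atTop 1] with n hn
    have hmax : max n 1 = n := max_eq_left hn
    have hnR : (0:ℝ) < (n:ℝ) := by exact_mod_cast hn
    have h1 : G (v n) = Real.exp (-β / n) := by
      rw [hGv n]; simp only [hc_def, hmax]
    have : B n = Real.exp ((m n : ℝ) * (-β / n)) := by
      simp only [hB_def]
      rw [h1, ← Real.exp_nat_mul]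
    rw [this]
    congr 1
    ring
  have := hABlim.add hBlim
  rw [zero_add] at this
  apply this.congr
  intro n
  ring
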